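/- arXiv:2309.15404 — 3 statements merged into one kernel-verified Lean document; each statement's English description precedes it below -/
import Mathlib

section
/- Let A be a finitely generated graded k-algebra of Krull dimension r which is an integral domain, and B ⊂ A a finitely generated graded subalgebra of the same Krull dimension with [KP(A):KP(B)] finite. Then s_A·Vol(A) ≥ [KP(A):KP(B)] · s_B·Vol(B), where s_A, s_B are the saturators of A and B. In particular [KP(A):KP(B)] ≤ s_A Vol(A)/(s_B Vol(B)). -/
open Filter
open scoped Classical
set_option synthInstance.maxHeartbeats 1000000
set_option maxHeartbeats 1000000

/-- The set of fractions `a/b` with `a, b` homogeneous of the same degree in the graded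
family `ℱ`, inside the fraction field. -/
def fracSet {k R : Type*} [Field k] [CommRing R] [IsDomain R] [Algebra k R]
    (ℱ : ℕ → Submodule k R) : Set (FractionRing R) :=
  {x | ∃ n : ℕ, ∃ a ∈ ℱ n, ∃ b ∈ ℱ n, b ≠ 0 ∧
    x = algebraMap R (FractionRing R) a / algebraMap R (FractionRing R) b}

/-- `KP(ℱ)`: the rational function field of `Proj` of the graded algebra with pieces `ℱ`,
realized as the subfield of the fraction field generated by quotients of homogeneous
elements of equal degree. -/
noncomputable def KP {k R : Type*} [Field k] [CommRing R] [IsDomain R] [Algebra k R]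
    (ℱ : ℕ → Submodule k R) : Subfield (FractionRing R) :=
  Subfield.closure (fracSet ℱ)

lemma inj_aux {sA sB : ℕ} (hsA : 0 < sA) (hsB : 0 < sB)
    {m m' j j' : ℕ} (hj : j < sB / Nat.gcd sA sB) (hj' : j' < sB / Nat.gcd sA sB)
    (h : sB * m + sA * j = sB * m' + sA * j') : m = m' ∧ j = j' := by
  set g := Nat.gcd sA sB with hg
  have hg0 : 0 < g := Nat.gcd_pos_of_pos_left _ hsA
  set sa := sA / g with hsa'
  set sb := sB / g with hsb'
  have hsa : g * sa = sA := Nat.mul_div_cancel' (Nat.gcd_dvd_left sA sB)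
  have hsb : g * sb = sB := Nat.mul_div_cancel' (Nat.gcd_dvd_right sA sB)
  have cop : Nat.Coprime sa sb := Nat.coprime_div_gcd_div_gcd hg0
  have hsaz : ((g : ℤ)) * (sa : ℤ) = (sA : ℤ) := by exact_mod_cast hsa
  have hsbz : ((g : ℤ)) * (sb : ℤ) = (sB : ℤ) := by exact_mod_cast hsb
  have hz : (sB : ℤ) * m + sA * j = sB * m' + sA * j' := by exact_mod_cast h
  have h2 : (g : ℤ) * ((sb : ℤ) * ((m : ℤ) - m')) = (g : ℤ) * ((sa : ℤ) * ((j' : ℤ) - j)) := by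
    linear_combination hz + ((m : ℤ) - m') * hsbz + ((j : ℤ) - j') * hsaz
  have hE : (sb : ℤ) * ((m : ℤ) - m') = (sa : ℤ) * ((j' : ℤ) - j) :=
    mul_left_cancel₀ (by exact_mod_cast hg0.ne') h2
  have hdvd : (sb : ℤ) ∣ (sa : ℤ) * ((j' : ℤ) - j) := ⟨(m : ℤ) - m', hE.symm⟩
  have hcopZ : IsCoprime (sb : ℤ) (sa : ℤ) := Nat.isCoprime_iff_coprime.mpr cop.symm
  have hdvd2 : (sb : ℤ) ∣ ((j' : ℤ) - j) := hcopZ.dvd_of_dvd_mul_left hdvd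
  have hjj : ((j' : ℤ) - j) = 0 := by
    apply Int.eq_zero_of_dvd_of_natAbs_lt_natAbs hdvd2
    simp only [Int.natAbs_natCast]
    omega
  have hjeq : j = j' := by omega
  subst hjeq
  have h3 : sB * m = sB * m' := by omega
  exact ⟨Nat.eq_of_mul_eq_mul_left hsB h3, rfl⟩

lemma rep_coprime {m n : ℕ} (cop : Nat.Coprime m n) (j : ℕ) (hj : m * n ≤ j) :
    ∃ a b : ℕ, j = a * m + b * n := by
  rcases Nat.lt_or_ge m 2 with hm | hm
  · interval_cases m
    · have : n = 1 := by simpa [Nat.Coprime] using cop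
      exact ⟨0, j, by simp [this]⟩
    · exact ⟨j, 0, by simp⟩
  rcases Nat.lt_or_ge n 2 with hn | hn
  · interval_cases n
    · have : m = 1 := by simpa [Nat.Coprime] using cop
      omega
    · exact ⟨0, j, by simp⟩
  have hfr := frobeniusNumber_pair cop hm hn
  have hlt : m * n - m - n < j := by
    have h1 : 0 < m * n - m := by
      have : m * 1 < m * n := Nat.mul_lt_mul_of_le_of_lt (le_refl m) (by omega) (by omega)
      omega
    omega
  have hj2 : j ∈ AddSubmonoid.closure ({m, n} : Set ℕ) := by
    by_contra hmem
    exact absurd (hfr.2 hmem) (by omega)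
  rw [AddSubmonoid.mem_closure_pair] at hj2
  obtain ⟨a, b, hab⟩ := hj2
  exact ⟨a, b, by simpa [smul_eq_mul] using hab.symm⟩

lemma dvd_of_isLeast {P : ℕ → Prop} (hadd : ∀ m n, P m → P n → P (m + n))
    {s : ℕ} (hs : IsLeast {m | 0 < m ∧ ∀ᶠ i in atTop, P (m * i)} s)
    {n : ℕ} (hn : P n) : s ∣ n := by
  rcases Nat.eq_zero_or_pos n with rfl | hn0
  · exact dvd_zero s
  have hs0 : 0 < s := hs.1.1
  obtain ⟨i₀, hi₀⟩ := eventually_atTop.1 hs.1.2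
  set g := Nat.gcd s n with hg
  have hg0 : 0 < g := Nat.gcd_pos_of_pos_left _ hs0
  set s' := s / g with hs'def
  set n' := n / g with hn'def
  have hs' : g * s' = s := Nat.mul_div_cancel' (Nat.gcd_dvd_left s n)
  have hn' : g * n' = n := Nat.mul_div_cancel' (Nat.gcd_dvd_right s n)
  have cop : Nat.Coprime n' s' := (Nat.coprime_div_gcd_div_gcd hg0).symm
  have aux : ∀ a b, i₀ ≤ b → P (a * n + b * s) := by
    intro a
    induction a with
    | zero =>
      intro b hb
      simpa [mul_comm] using hi₀ b hb
    | succ a ih =>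
      intro b hb
      have := hadd n (a * n + b * s) hn (ih b hb)
      have harith : n + (a * n + b * s) = (a + 1) * n + b * s := by ring
      rwa [harith] at this
  have hmem : g ∈ {m | 0 < m ∧ ∀ᶠ i in atTop, P (m * i)} := by
    refine ⟨hg0, eventually_atTop.2 ⟨n' * s' + i₀ * s', fun i hi => ?_⟩⟩
    obtain ⟨a, b, hab⟩ := rep_coprime cop (i - i₀ * s') (by omega)
    have hexp : (b + i₀) * s' = b * s' + i₀ * s' := by ring
    have hi2 : i = a * n' + (b + i₀) * s' := by omega
    have : g * i = a * n + (b + i₀) * s := by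
      rw [hi2, ← hs', ← hn']; ring
    rw [this]
    exact aux a (b + i₀) (by omega)
  have h1 : s ≤ g := hs.2 hmem
  have h2 : g ≤ s := Nat.le_of_dvd hs0 (Nat.gcd_dvd_left s n)
  have : g = s := le_antisymm h2 h1
  exact this ▸ Nat.gcd_dvd_right s n

section P1
variable {k R : Type*} [Field k] [CommRing R] [IsDomain R] [Algebra k R]

open DirectSum in
set_option maxHeartbeats 1000000 in
lemma piece_bound (𝒜 : ℕ → Submodule k R) [GradedAlgebra 𝒜]
    (hfg : Algebra.FiniteType k R) [FiniteDimensional k (𝒜 0)] :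
    ∃ s : ℕ, ∀ n : ℕ, FiniteDimensional k (𝒜 n) ∧
      Module.finrank k (𝒜 n) ≤ Module.finrank k (𝒜 0) * (n + 1) ^ s := by
  classical
  obtain ⟨S, hS⟩ := hfg.out
  set T : Finset R := S.biUnion
    (fun g => (decompose 𝒜 g).support.image (fun i => ((decompose 𝒜 g) i : R))) with hT
  have hTsub : ∀ t ∈ T, ∃ i, t ∈ 𝒜 i := by
    intro t ht
    rw [hT, Finset.mem_biUnion] at ht
    obtain ⟨g, _, ht⟩ := ht
    rw [Finset.mem_image] at ht
    obtain ⟨i, _, rfl⟩ := ht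
    exact ⟨i, ((decompose 𝒜 g) i).2⟩
  have hTadj : Algebra.adjoin k (T : Set R) = ⊤ := by
    rw [eq_top_iff, ← hS]
    rw [Algebra.adjoin_le_iff]
    intro g hg
    have : g = ∑ i ∈ (decompose 𝒜 g).support, ((decompose 𝒜 g) i : R) :=
      (DirectSum.sum_support_decompose 𝒜 g).symm
    rw [this]
    apply Subalgebra.sum_mem
    intro i hi
    apply Algebra.subset_adjoin
    have hmem : ((decompose 𝒜 g) i : R) ∈ T := by
      rw [hT, Finset.mem_biUnion]
      exact ⟨g, hg, Finset.mem_image_of_mem _ hi⟩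
    exact hmem
  -- degrees
  set ι := {x : R // x ∈ T}
  have hdeg' : ∀ t : ι, ∃ i, (t : R) ∈ 𝒜 i := fun t => hTsub t t.2
  choose deg hdeg using hdeg'
  set mon : (ι → ℕ) → R := fun α => ∏ t : ι, (t : R) ^ α t with hmon
  set Wprop : ℕ → (ι → ℕ) → Prop :=
    fun n α => (∀ t, deg t = 0 → α t = 0) ∧ (∑ t : ι, α t * deg t = n) with hWprop
  set Mset : ℕ → Set R := fun n => {x | ∃ α, Wprop n α ∧ ∃ c ∈ 𝒜 0, x = c * mon α} with hMset
  set F : ℕ → Submodule k R := fun n => Submodule.span k (Mset n) with hF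
  have hmon_mul : ∀ α β : ι → ℕ, mon α * mon β = mon (α + β) := by
    intro α β
    rw [hmon]
    simp only [Pi.add_apply, pow_add]
    rw [Finset.prod_mul_distrib]
  have hmon_mem : ∀ α : ι → ℕ, mon α ∈ 𝒜 (∑ t : ι, α t * deg t) := by
    intro α
    have := SetLike.prod_mem_graded 𝒜 (i := fun t : ι => α t * deg t)
      (g := fun t : ι => (t : R) ^ α t) (F := Finset.univ)
      (fun t _ => by
        have h := SetLike.pow_mem_graded (α t) (hdeg t)
        show (t : R) ^ α t ∈ 𝒜 (α t * deg t)
        simpa [smul_eq_mul, mul_comm] using h)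
    simpa using this
  have hMmul : ∀ m m' : ℕ, ∀ x ∈ F m, ∀ y ∈ F m', x * y ∈ F (m + m') := by
    intro m m' x hx y hy
    have h1 : x * y ∈ F m * F m' := Submodule.mul_mem_mul hx hy
    have h2 : F m * F m' ≤ F (m + m') := by
      rw [hF]
      rw [Submodule.span_mul_span]
      apply Submodule.span_le.2
      rintro _ ⟨x, hx, y, hy, rfl⟩
      rcases hx with ⟨α, ⟨hα0, hαs⟩, c, hc, rfl⟩
      rcases hy with ⟨β, ⟨hβ0, hβs⟩, c', hc', rfl⟩
      apply Submodule.subset_span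
      refine ⟨α + β, ⟨?_, ?_⟩, c * c', SetLike.mul_mem_graded hc hc', ?_⟩
      · intro t ht; simp [hα0 t ht, hβ0 t ht]
      · simp only [Pi.add_apply, add_mul, Finset.sum_add_distrib, hαs, hβs]
      · rw [← hmon_mul]; ring
    exact h2 h1
  have h1F : (1 : R) ∈ F 0 := by
    apply Submodule.subset_span
    refine ⟨0, ⟨fun t _ => rfl, by simp⟩, 1, SetLike.GradedOne.one_mem, by simp [hmon]⟩
  have hA0F : ∀ c ∈ 𝒜 0, c ∈ F 0 := by
    intro c hc
    apply Submodule.subset_span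
    exact ⟨0, ⟨fun t _ => rfl, by simp⟩, c, hc, by simp [hmon]⟩
  have hTF : ∀ t : ι, (t : R) ∈ F (deg t) := by
    intro t
    by_cases h0 : deg t = 0
    · rw [h0]; exact hA0F _ (h0 ▸ hdeg t)
    · apply Submodule.subset_span
      refine ⟨Pi.single t 1, ⟨?_, ?_⟩, 1, SetLike.GradedOne.one_mem, ?_⟩
      · intro t' ht'
        by_cases he : t' = t
        · subst he; exact absurd ht' h0
        · simp [Pi.single_apply, he]
      · rw [Finset.sum_eq_single t]
        · simp
        · intro t' _ he; simp [Pi.single_apply, he]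
        · intro h; exact absurd (Finset.mem_univ t) h
      · rw [one_mul]
        show (t : R) = ∏ t' : ι, (t' : R) ^ (Pi.single t 1) t'
        rw [Finset.prod_eq_single t]
        · simp
        · intro t' _ he; simp [Pi.single_apply, he]
        · intro h; exact absurd (Finset.mem_univ t) h
  have hclos : ∀ w ∈ Submonoid.closure (T : Set R), ∃ m, w ∈ 𝒜 m ∧ w ∈ F m := by
    intro w hw
    induction hw using Submonoid.closure_induction with
    | mem x hx => exact ⟨deg ⟨x, hx⟩, hdeg ⟨x, hx⟩, hTF ⟨x, hx⟩⟩
    | one => exact ⟨0, SetLike.GradedOne.one_mem, h1F⟩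
    | mul x y hx hy ihx ihy =>
      obtain ⟨m, hm, hmF⟩ := ihx
      obtain ⟨m', hm', hm'F⟩ := ihy
      exact ⟨m + m', SetLike.mul_mem_graded hm hm', hMmul m m' x hmF y hm'F⟩
  have hdecF : ∀ x : R, ∀ n, ((decompose 𝒜 x) n : R) ∈ F n := by
    intro x
    have hx : x ∈ Submodule.span k ((Submonoid.closure (T : Set R) : Set R)) := by
      have hx' : x ∈ Subalgebra.toSubmodule (Algebra.adjoin k (T : Set R)) := by
        rw [hTadj]; trivial
      rwa [Algebra.adjoin_eq_span] at hx'
    induction hx using Submodule.span_induction with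
    | mem w hw =>
      intro n
      obtain ⟨m, hw𝒜, hwF⟩ := hclos w hw
      by_cases he : n = m
      · subst he; rw [decompose_of_mem_same 𝒜 hw𝒜]; exact hwF
      · rw [decompose_of_mem_ne 𝒜 hw𝒜 (Ne.symm he)]; exact Submodule.zero_mem _
    | zero => intro n; simp only [decompose_zero, DirectSum.zero_apply, Submodule.coe_zero]
              exact Submodule.zero_mem _
    | add x y hx hy ihx ihy =>
      intro n
      rw [decompose_add, DirectSum.add_apply, Submodule.coe_add]
      exact Submodule.add_mem _ (ihx n) (ihy n)
    | smul c x hx ihx =>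
      intro n
      rw [decompose_smul, DFinsupp.smul_apply, Submodule.coe_smul]
      exact Submodule.smul_mem _ _ (ihx n)
  have hAF : ∀ n, 𝒜 n ≤ F n := by
    intro n x hx
    have := hdecF x n
    rwa [decompose_of_mem_same 𝒜 hx] at this
  -- dimension bound via finite sup
  set WFin : ℕ → Finset (ι → ℕ) :=
    fun n => (Fintype.piFinset (fun _ : ι => Finset.range (n + 1))).filter (Wprop n) with hWFin
  set F' : ℕ → Submodule k R :=
    fun n => (WFin n).sup (fun α => Submodule.map (LinearMap.mulRight k (mon α)) (𝒜 0)) with hF'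
  have hFF' : ∀ n, F n ≤ F' n := by
    intro n
    rw [hF]
    apply Submodule.span_le.2
    rintro _ ⟨α, ⟨hα0, hαs⟩, c, hc, rfl⟩
    have hαW : α ∈ WFin n := by
      rw [hWFin, Finset.mem_filter]
      refine ⟨Fintype.mem_piFinset.2 (fun t => ?_), hα0, hαs⟩
      rw [Finset.mem_range]
      by_cases h0 : deg t = 0
      · rw [hα0 t h0]; omega
      · have h1 : α t ≤ α t * deg t := Nat.le_mul_of_pos_right _ (Nat.pos_of_ne_zero h0)
        have h2 : α t * deg t ≤ ∑ t' : ι, α t' * deg t' :=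
          Finset.single_le_sum (f := fun t' : ι => α t' * deg t')
            (fun t' _ => Nat.zero_le _) (Finset.mem_univ t)
        omega
    have : c * mon α ∈ Submodule.map (LinearMap.mulRight k (mon α)) (𝒜 0) :=
      ⟨c, hc, by simp [LinearMap.mulRight_apply]⟩
    exact Finset.le_sup (f := fun α => Submodule.map (LinearMap.mulRight k (mon α)) (𝒜 0))
      hαW this
  have hF'fd : ∀ n, FiniteDimensional k (F' n) := by
    intro n
    rw [hF']
    exact Submodule.finiteDimensional_finset_sup _ _
  refine ⟨Fintype.card ι, fun n => ?_⟩
  haveI := hF'fd n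
  have hfd : FiniteDimensional k (𝒜 n) :=
    Submodule.finiteDimensional_of_le ((hAF n).trans (hFF' n))
  refine ⟨hfd, ?_⟩
  have h1 : Module.finrank k (𝒜 n) ≤ Module.finrank k (F' n) :=
    Submodule.finrank_mono ((hAF n).trans (hFF' n))
  have hgen : ∀ s : Finset (ι → ℕ),
      Module.finrank k ↥(s.sup (fun α => Submodule.map (LinearMap.mulRight k (mon α)) (𝒜 0)))
        ≤ s.card * Module.finrank k (𝒜 0) := by
    intro s
    induction s using Finset.cons_induction with
    | empty => simp
    | cons a s ha ih =>
      rw [Finset.sup_cons, Finset.card_cons]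
      haveI : FiniteDimensional k ↥(Submodule.map (LinearMap.mulRight k (mon a)) (𝒜 0)) :=
        Module.Finite.map _ _
      haveI : FiniteDimensional k
          ↥(s.sup (fun α => Submodule.map (LinearMap.mulRight k (mon α)) (𝒜 0))) :=
        Submodule.finiteDimensional_finset_sup _ _
      have hkey := Submodule.finrank_sup_add_finrank_inf_eq
        (Submodule.map (LinearMap.mulRight k (mon a)) (𝒜 0))
        (s.sup (fun α => Submodule.map (LinearMap.mulRight k (mon α)) (𝒜 0)))
      have hmap : Module.finrank k ↥(Submodule.map (LinearMap.mulRight k (mon a)) (𝒜 0))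
          ≤ Module.finrank k (𝒜 0) := Submodule.finrank_map_le _ _
      have hexp : (s.card + 1) * Module.finrank k (𝒜 0)
          = Module.finrank k (𝒜 0) + s.card * Module.finrank k (𝒜 0) := by ring
      omega
  have h2 : Module.finrank k (F' n) ≤ (WFin n).card * Module.finrank k (𝒜 0) := hgen (WFin n)
  have h3 : (WFin n).card ≤ (n + 1) ^ Fintype.card ι := by
    calc (WFin n).card ≤ (Fintype.piFinset (fun _ : ι => Finset.range (n + 1))).card :=
          Finset.card_filter_le _ _
      _ = (n + 1) ^ Fintype.card ι := by
          rw [Fintype.card_piFinset]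
          simp
  calc Module.finrank k (𝒜 n) ≤ (WFin n).card * Module.finrank k (𝒜 0) := h1.trans h2
    _ ≤ (n + 1) ^ Fintype.card ι * Module.finrank k (𝒜 0) := Nat.mul_le_mul_right _ h3
    _ = Module.finrank k (𝒜 0) * (n + 1) ^ Fintype.card ι := Nat.mul_comm _ _

end P1

section Counting
variable {k R : Type*} [Field k] [CommRing R] [IsDomain R] [Algebra k R]

set_option maxHeartbeats 1000000 in
set_option synthInstance.maxHeartbeats 1000000 in
lemma counting (𝒜 ℬ : ℕ → Submodule k R) [GradedAlgebra 𝒜]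
    (hBA : ∀ i, ℬ i ≤ 𝒜 i)
    (hfd : ∀ n, FiniteDimensional k (𝒜 n))
    [FiniteDimensional ↥(KP ℬ) ↥(IntermediateField.adjoin ↥(KP ℬ) (fracSet 𝒜))] :
    ∃ N : ℕ, ∀ m e : ℕ, ∀ z : R, z ≠ 0 → z ∈ 𝒜 e →
      (Module.finrank ↥(KP ℬ) ↥(IntermediateField.adjoin ↥(KP ℬ) (fracSet 𝒜))) *
        Module.finrank k (ℬ m) ≤ Module.finrank k (𝒜 (m + N + e)) := by
  classical
  set K := FractionRing R
  set ι : R →+* K := (algebraMap R K : R →+* K) with hι'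
  have hι : Function.Injective ι := IsFractionRing.injective R K
  set L : Subfield K := KP ℬ with hL
  set E := IntermediateField.adjoin ↥L (fracSet 𝒜) with hE
  set d := Module.finrank ↥L ↥E with hd
  -- fracSet 𝒜 is a submonoid
  have h1mem : (1 : K) ∈ fracSet 𝒜 := by
    refine ⟨0, 1, SetLike.GradedOne.one_mem, 1, SetLike.GradedOne.one_mem, one_ne_zero, ?_⟩
    simp
  have hmulmem : ∀ x y : K, x ∈ fracSet 𝒜 → y ∈ fracSet 𝒜 → x * y ∈ fracSet 𝒜 := by
    rintro _ _ ⟨n, a, ha, b, hb, hbne, rfl⟩ ⟨n', a', ha', b', hb', hbne', rfl⟩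
    refine ⟨n + n', a * a', SetLike.mul_mem_graded ha ha', b * b',
      SetLike.mul_mem_graded hb hb', mul_ne_zero hbne hbne', ?_⟩
    rw [map_mul, map_mul, div_mul_div_comm]
  -- algebraicity
  haveI : Algebra.IsIntegral ↥L ↥E := Algebra.IsIntegral.of_finite ↥L ↥E
  have halg : ∀ x ∈ fracSet 𝒜, IsAlgebraic ↥L x := by
    intro x hx
    have hxE : x ∈ E := IntermediateField.subset_adjoin _ _ hx
    have : IsAlgebraic ↥L (⟨x, hxE⟩ : ↥E) :=
      (Algebra.IsIntegral.isIntegral (⟨x, hxE⟩ : ↥E)).isAlgebraic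
    exact (IntermediateField.isAlgebraic_iff).mp this
  have hEsub : E.toSubalgebra = Algebra.adjoin ↥L (fracSet 𝒜) :=
    IntermediateField.adjoin_toSubalgebra_of_isAlgebraic halg
  have hclos : (Submonoid.closure (fracSet 𝒜) : Set K) = fracSet 𝒜 := by
    apply Set.Subset.antisymm
    · intro w hw
      induction hw using Submonoid.closure_induction with
      | mem y hy => exact hy
      | one => exact h1mem
      | mul y y' hy hy' ihy ihy' => exact hmulmem y y' ihy ihy'
    · exact Submonoid.subset_closure
  have hVsub : Subalgebra.toSubmodule (Algebra.adjoin ↥L (fracSet 𝒜))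
      = Submodule.span ↥L (fracSet 𝒜) := by
    rw [Algebra.adjoin_eq_span, hclos]
  set V : Submodule ↥L K := Submodule.span ↥L (fracSet 𝒜) with hV
  have hfinrankEV : Module.finrank ↥L ↥E = Module.finrank ↥L ↥V := by
    have h2 : Subalgebra.toSubmodule E.toSubalgebra = V := by rw [hEsub, hVsub]
    have h3 : Module.finrank ↥L ↥(Subalgebra.toSubmodule E.toSubalgebra)
        = Module.finrank ↥L ↥V := LinearEquiv.finrank_eq (LinearEquiv.ofEq _ _ h2)
    exact h3
  haveI hVfd : FiniteDimensional ↥L ↥V := by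
    have h2 : Subalgebra.toSubmodule E.toSubalgebra = V := by rw [hEsub, hVsub]
    haveI hfd2 : FiniteDimensional ↥L ↥(Subalgebra.toSubmodule E.toSubalgebra) :=
      inferInstanceAs (FiniteDimensional ↥L ↥E)
    exact Module.Finite.equiv (LinearEquiv.ofEq _ _ h2)
  obtain ⟨bs, hbsub, hbspan, hbind⟩ := exists_linearIndependent ↥L (fracSet 𝒜)
  have hbsV : ∀ y ∈ bs, y ∈ V := fun y hy => Submodule.subset_span (hbsub hy)
  have hbfin : bs.Finite := by
    have hind2 : LinearIndependent ↥L (fun y : bs => (⟨y.1, hbsV y.1 y.2⟩ : ↥V)) := by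
      apply LinearIndependent.of_comp V.subtype
      exact hbind
    exact Set.finite_coe_iff.mp hind2.finite
  haveI : Fintype bs := hbfin.fintype
  have hcard : Fintype.card bs = d := by
    have h1 : Module.finrank ↥L ↥(Submodule.span ↥L bs) = bs.toFinset.card :=
      finrank_span_set_eq_card hbind
    rw [hbspan, Set.toFinset_card] at h1
    rw [hd, hfinrankEV]
    exact h1.symm
  set eq : Fin d ≃ bs := (Fintype.equivFinOfCardEq hcard).symm with heq
  set x : Fin d → K := fun i => ((eq i : bs) : K) with hx
  have hxind : LinearIndependent ↥L x := hbind.comp eq eq.injective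
  have hxmem : ∀ i, x i ∈ fracSet 𝒜 := fun i => hbsub (eq i).2
  -- extract data
  have hxdata : ∀ i : Fin d, ∃ n : ℕ, ∃ a ∈ 𝒜 n, ∃ b ∈ 𝒜 n, b ≠ 0 ∧ x i = ι a / ι b :=
    fun i => hxmem i
  choose nn aa haa bb hbb hbne hxeq using hxdata
  set N := ∑ i : Fin d, nn i with hN
  set B : R := ∏ i : Fin d, bb i with hB
  have hBmem : B ∈ 𝒜 N := SetLike.prod_mem_graded 𝒜 nn bb (F := Finset.univ) (fun i _ => hbb i)
  have hBne : B ≠ 0 := Finset.prod_ne_zero_iff.mpr (fun i _ => hbne i)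
  have hbnei : ∀ i, ι (bb i) ≠ 0 := fun i => (map_ne_zero_iff ι hι).mpr (hbne i)
  have hιBne : ι B ≠ 0 := (map_ne_zero_iff ι hι).mpr hBne
  set Y : Fin d → R := fun i => aa i * ∏ j ∈ Finset.univ.erase i, bb j with hY
  have hYmem : ∀ i, Y i ∈ 𝒜 N := by
    intro i
    have h1 : (∏ j ∈ Finset.univ.erase i, bb j) ∈ 𝒜 (∑ j ∈ Finset.univ.erase i, nn j) :=
      SetLike.prod_mem_graded 𝒜 nn bb (F := Finset.univ.erase i) (fun j _ => hbb j)
    have h2 := SetLike.mul_mem_graded (haa i) h1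
    rwa [Finset.add_sum_erase _ _ (Finset.mem_univ i)] at h2
  have hYeq : ∀ i, ι (Y i) = x i * ι B := by
    intro i
    rw [hxeq i, div_mul_eq_mul_div, eq_div_iff (hbnei i), ← map_mul, ← map_mul]
    congr 1
    rw [hY, hB]
    simp only []
    rw [mul_assoc, Finset.prod_erase_mul _ _ (Finset.mem_univ i)]
  refine ⟨N, ?_⟩
  intro m e z hz hze
  haveI := hfd (m + N + e)
  haveI := hfd m
  haveI : FiniteDimensional k ↥(ℬ m) := Submodule.finiteDimensional_of_le (hBA m)
  -- the k-linear injection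
  have hmemT : ∀ c : Fin d → ↥(ℬ m), (∑ i, ((c i : R) * Y i) * z) ∈ 𝒜 (m + N + e) := by
    intro c
    apply Submodule.sum_mem
    intro i _
    exact SetLike.mul_mem_graded (SetLike.mul_mem_graded (hBA m (c i).2) (hYmem i)) hze
  set Φ : (Fin d → ↥(ℬ m)) →ₗ[k] ↥(𝒜 (m + N + e)) :=
    { toFun := fun c => ⟨∑ i, ((c i : R) * Y i) * z, hmemT c⟩
      map_add' := by
        intro c c'
        apply Subtype.ext
        simp [add_mul, Finset.sum_add_distrib]
      map_smul' := by
        intro r c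
        apply Subtype.ext
        simp [Finset.smul_sum, smul_mul_assoc] } with hΦ
  have hΦinj : Function.Injective Φ := by
    have hker : ∀ c, Φ c = 0 → c = 0 := by
      intro c hc
      have hsum : ∑ i, ((c i : R) * Y i) * z = 0 := congrArg Subtype.val hc
      have hsum2 : (∑ i, ι (c i : R) * ι (Y i)) * ι z = 0 := by
        have := congrArg ι hsum
        rw [map_sum] at this
        simp only [map_mul] at this
        rw [Finset.sum_mul]
        simpa using this
      have hzne : ι z ≠ 0 := (map_ne_zero_iff ι hι).mpr hz
      have hrel : ∑ i, ι (c i : R) * ι (Y i) = 0 :=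
        (mul_eq_zero.mp hsum2).resolve_right hzne
      by_contra hc0
      obtain ⟨i₀, hi₀⟩ := Function.ne_iff.mp hc0
      set γ : K := ι (c i₀ : R) with hγ'
      have hci₀ : (c i₀ : R) ≠ 0 := by
        intro h
        exact hi₀ (Subtype.ext (by simpa using h))
      have hγ : γ ≠ 0 := (map_ne_zero_iff ι hι).mpr hci₀
      set lam : Fin d → ↥L := fun i =>
        ⟨ι (c i : R) / γ, Subfield.subset_closure
          ⟨m, (c i : R), (c i).2, (c i₀ : R), (c i₀).2, hci₀, rfl⟩⟩ with hlam
      have hlsum : ∑ i, lam i • x i = 0 := by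
        have hxiv : ∀ i, x i = ι (Y i) / ι B := by
          intro i
          rw [hYeq i, mul_div_cancel_right₀ _ hιBne]
        have hterm : ∀ i, lam i • x i = (ι (c i : R) * ι (Y i)) * (γ * ι B)⁻¹ := by
          intro i
          have hsm : lam i • x i = (ι (c i : R) / γ) * x i := rfl
          rw [hsm, hxiv i]
          rw [div_mul_div_comm, div_eq_mul_inv]
          try ring
        rw [Finset.sum_congr rfl (fun i _ => hterm i), ← Finset.sum_mul, hrel, zero_mul]
      have hall := Fintype.linearIndependent_iff.mp hxind lam hlsum i₀
      have : (ι (c i₀ : R) / γ : K) = 0 := congrArg Subtype.val hall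
      rw [← hγ', div_self hγ] at this
      exact one_ne_zero this
    intro c c' hcc
    have := hker (c - c') (by rw [map_sub, hcc, sub_self])
    exact sub_eq_zero.mp this
  have hle := LinearMap.finrank_le_finrank_of_injective hΦinj
  rw [Module.finrank_pi_fintype] at hle
  simp only [Finset.sum_const, Finset.card_univ, Fintype.card_fin, smul_eq_mul] at hle
  exact hle

end Counting

lemma summable_coeff {a : ℕ → ℕ} {C s : ℕ} (hC : ∀ n, a n ≤ C * (n + 1) ^ s)
    {t : ℝ} (ht0 : 0 < t) (ht1 : t < 1) : Summable (fun n => (a n : ℝ) * t ^ n) := by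
  have h1 : Summable (fun n : ℕ => (n : ℝ) ^ s * t ^ n) :=
    summable_pow_mul_geometric_of_norm_lt_one s (by rw [Real.norm_eq_abs, abs_lt]; constructor <;> linarith)
  have h2 : Summable (fun n : ℕ => ((n + 1 : ℕ) : ℝ) ^ s * t ^ (n + 1)) := by
    have := (summable_nat_add_iff (f := fun n : ℕ => (n : ℝ) ^ s * t ^ n) 1).2 h1
    simpa using this
  have h3 : Summable (fun n : ℕ => (C : ℝ) * t⁻¹ * (((n + 1 : ℕ) : ℝ) ^ s * t ^ (n + 1))) :=
    h2.mul_left _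
  apply Summable.of_nonneg_of_le (fun n => by positivity) (fun n => ?_) h3
  have hle : (a n : ℝ) ≤ (C : ℝ) * ((n + 1 : ℕ) : ℝ) ^ s := by
    have := hC n
    push_cast
    exact_mod_cast Nat.cast_le.mpr this
  calc (a n : ℝ) * t ^ n ≤ ((C : ℝ) * ((n + 1 : ℕ) : ℝ) ^ s) * t ^ n := by
        apply mul_le_mul_of_nonneg_right hle (by positivity)
    _ = (C : ℝ) * t⁻¹ * (((n + 1 : ℕ) : ℝ) ^ s * t ^ (n + 1)) := by
        rw [pow_succ]
        field_simp

lemma analysis_step {a b : ℕ → ℕ} {d q sB : ℕ} {E : ℕ → ℕ}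
    (hE : Function.Injective (fun p : ℕ × Fin q => sB * p.1 + E p.2.1))
    (hkey : ∀ (m : ℕ) (j : Fin q), d * b (sB * m) ≤ a (sB * m + E j.1))
    (hsupp : ∀ n, b n ≠ 0 → sB ∣ n) (hsB : 0 < sB)
    {C s : ℕ} (hC : ∀ n, a n ≤ C * (n + 1) ^ s) (hba : ∀ n, b n ≤ a n)
    {t : ℝ} (ht0 : 0 < t) (ht1 : t < 1) :
    (∑ j : Fin q, (d : ℝ) * t ^ (E j.1)) * (∑' n, (b n : ℝ) * t ^ n)
      ≤ ∑' n, (a n : ℝ) * t ^ n := by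
  have ha_sum : Summable (fun n => (a n : ℝ) * t ^ n) := summable_coeff hC ht0 ht1
  have hb_sum : Summable (fun n => (b n : ℝ) * t ^ n) :=
    summable_coeff (fun n => (hba n).trans (hC n)) ht0 ht1
  set e : ℕ × Fin q → ℕ := fun p => sB * p.1 + E p.2.1 with he
  set f : ℕ × Fin q → ℝ := fun p => ((d * b (sB * p.1) : ℕ) : ℝ) * t ^ (e p) with hf
  have hf_le : ∀ p, f p ≤ (a (e p) : ℝ) * t ^ (e p) := by
    intro p
    apply mul_le_mul_of_nonneg_right _ (by positivity)
    exact_mod_cast hkey p.1 p.2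
  have hf_nonneg : ∀ p, 0 ≤ f p := fun p => by positivity
  have hcomp : Summable (fun p : ℕ × Fin q => (a (e p) : ℝ) * t ^ (e p)) :=
    ha_sum.comp_injective hE
  have hf_sum : Summable f := Summable.of_nonneg_of_le hf_nonneg hf_le hcomp
  have h1 : ∑' p, f p ≤ ∑' n, (a n : ℝ) * t ^ n :=
    hf_sum.tsum_le_tsum_of_inj e hE (fun c _ => by positivity) hf_le ha_sum
  have h2 : ∑' p, f p
      = (∑ j : Fin q, (d : ℝ) * t ^ (E j.1)) * (∑' n, (b n : ℝ) * t ^ n) := by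
    rw [Summable.tsum_prod hf_sum]
    have hinner : ∀ m : ℕ, (∑' j : Fin q, f (m, j))
        = (∑ j : Fin q, (d : ℝ) * t ^ (E j.1)) * ((b (sB * m) : ℝ) * t ^ (sB * m)) := by
      intro m
      rw [tsum_fintype]
      rw [Finset.sum_mul]
      apply Finset.sum_congr rfl
      intro j _
      show ((d * b (sB * m) : ℕ) : ℝ) * t ^ (sB * m + E j.1) = _
      rw [pow_add]
      push_cast
      ring
    rw [tsum_congr hinner, tsum_mul_left]
    congr 1
    have hinj2 : Function.Injective (fun m : ℕ => sB * m) :=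
      fun m m' h => Nat.eq_of_mul_eq_mul_left hsB h
    have hsupp2 : Function.support (fun n => (b n : ℝ) * t ^ n)
        ⊆ Set.range (fun m : ℕ => sB * m) := by
      intro n hn
      have hbn : b n ≠ 0 := by
        intro h
        apply hn
        simp [h]
      obtain ⟨m, hm⟩ := hsupp n hbn
      exact ⟨m, hm.symm⟩
    exact hinj2.tsum_eq hsupp2
  rw [← h2]
  exact h1

/-- For a finitely generated graded domain `A` of Krull dimension `r` and a graded subalgebra
`B ⊂ A` of the same Krull dimension with `[KP(A):KP(B)]` finite, one has
`s_A Vol(A) ≥ [KP(A):KP(B)] · s_B Vol(B)`, where `s_A, s_B` are the saturators. -/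
theorem stmt_5 {k R : Type*} [Field k] [CharZero k] [CommRing R] [IsDomain R] [Algebra k R]
    (𝒜 ℬ : ℕ → Submodule k R) [GradedAlgebra 𝒜]
    (hfg : Algebra.FiniteType k R) (r : ℕ) (hr : ringKrullDim R = r)
    (hBA : ∀ i, ℬ i ≤ 𝒜 i) (hB1 : (1 : R) ∈ ℬ 0)
    (hBmul : ∀ i j : ℕ, ∀ x ∈ ℬ i, ∀ y ∈ ℬ j, x * y ∈ ℬ (i + j))
    (sA sB : ℕ)
    (hsA : IsLeast {m : ℕ | 0 < m ∧ ∀ᶠ i in atTop, Module.finrank k (𝒜 (m * i)) ≠ 0} sA)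
    (hsB : IsLeast {m : ℕ | 0 < m ∧ ∀ᶠ i in atTop, Module.finrank k (ℬ (m * i)) ≠ 0} sB)
    (VA VB : ℝ)
    (hVA : Tendsto
      (fun t : ℝ => (1 - t) ^ r * ∑' i : ℕ, (Module.finrank k (𝒜 i) : ℝ) * t ^ i)
      (nhdsWithin 1 (Set.Iio 1)) (nhds VA))
    (hVB : Tendsto
      (fun t : ℝ => (1 - t) ^ r * ∑' i : ℕ, (Module.finrank k (ℬ i) : ℝ) * t ^ i)
      (nhdsWithin 1 (Set.Iio 1)) (nhds VB))
    [FiniteDimensional ↥(KP ℬ) ↥(IntermediateField.adjoin ↥(KP ℬ) (fracSet 𝒜))] :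
    (Module.finrank ↥(KP ℬ) ↥(IntermediateField.adjoin ↥(KP ℬ) (fracSet 𝒜)) : ℝ)
        * (sB : ℝ) * VB ≤ (sA : ℝ) * VA := by
  classical
  set d := Module.finrank ↥(KP ℬ) ↥(IntermediateField.adjoin ↥(KP ℬ) (fracSet 𝒜)) with hd
  have hsA0 : 0 < sA := hsA.1.1
  have hsB0 : 0 < sB := hsB.1.1
  obtain ⟨i₁, hi₁⟩ := eventually_atTop.1 hsA.1.2
  -- 𝒜 0 is finite dimensional
  haveI hA0 : FiniteDimensional k ↥(𝒜 0) := by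
    have hfr : Module.finrank k ↥(𝒜 (sA * i₁)) ≠ 0 := hi₁ i₁ le_rfl
    haveI hfd1 : FiniteDimensional k ↥(𝒜 (sA * i₁)) := by
      by_contra hc
      exact hfr (Module.finrank_of_not_finite hc)
    haveI : Nontrivial ↥(𝒜 (sA * i₁)) := Module.finrank_pos_iff.mp (Nat.pos_of_ne_zero hfr)
    obtain ⟨xx, hxx⟩ := exists_ne (0 : ↥(𝒜 (sA * i₁)))
    have hxne : (xx : R) ≠ 0 := fun hh => hxx (Subtype.ext (by simpa using hh))
    set ψ : ↥(𝒜 0) →ₗ[k] ↥(𝒜 (sA * i₁)) :=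
      { toFun := fun c => ⟨(c : R) * xx, by
          have := SetLike.mul_mem_graded c.2 xx.2
          rwa [zero_add] at this⟩
        map_add' := fun c c' => Subtype.ext (by simp [add_mul])
        map_smul' := fun rr c => Subtype.ext (by simp [smul_mul_assoc]) } with hψ
    apply FiniteDimensional.of_injective ψ
    intro c c' hcc
    have h1 : (c : R) * xx = (c' : R) * xx := congrArg Subtype.val hcc
    exact Subtype.ext (mul_right_cancel₀ hxne h1)
  obtain ⟨s, hsbnd⟩ := piece_bound 𝒜 hfg
  have hAfd : ∀ n, FiniteDimensional k ↥(𝒜 n) := fun n => (hsbnd n).1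
  have hBfd : ∀ n, FiniteDimensional k ↥(ℬ n) := fun n => by
    haveI := hAfd n; exact Submodule.finiteDimensional_of_le (hBA n)
  set a : ℕ → ℕ := fun n => Module.finrank k ↥(𝒜 n) with ha
  set b : ℕ → ℕ := fun n => Module.finrank k ↥(ℬ n) with hb
  have hba : ∀ n, b n ≤ a n := fun n => by
    haveI := hAfd n; exact Submodule.finrank_mono (hBA n)
  have hCb : ∀ n, a n ≤ (a 0) * (n + 1) ^ s := fun n => (hsbnd n).2
  -- support of B is contained in multiples of sB
  have hPadd : ∀ m n : ℕ, b m ≠ 0 → b n ≠ 0 → b (m + n) ≠ 0 := by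
    intro m n hm hn
    haveI := hBfd m; haveI := hBfd n; haveI := hBfd (m + n)
    haveI : Nontrivial ↥(ℬ m) := Module.finrank_pos_iff.mp (Nat.pos_of_ne_zero hm)
    haveI : Nontrivial ↥(ℬ n) := Module.finrank_pos_iff.mp (Nat.pos_of_ne_zero hn)
    obtain ⟨xm, hxm⟩ := exists_ne (0 : ↥(ℬ m))
    obtain ⟨xn, hxn⟩ := exists_ne (0 : ↥(ℬ n))
    have h1 : (xm : R) * xn ∈ ℬ (m + n) := hBmul m n _ xm.2 _ xn.2
    have h2 : (xm : R) * xn ≠ 0 := mul_ne_zero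
      (fun hh => hxm (Subtype.ext (by simpa using hh)))
      (fun hh => hxn (Subtype.ext (by simpa using hh)))
    haveI : Nontrivial ↥(ℬ (m + n)) :=
      ⟨⟨⟨_, h1⟩, 0, fun hh => h2 (by simpa using congrArg Subtype.val hh)⟩⟩
    exact (Module.finrank_pos_iff.mpr this).ne'
  have hBsupp : ∀ n, b n ≠ 0 → sB ∣ n := fun n hn =>
    dvd_of_isLeast (P := fun n => b n ≠ 0) hPadd hsB hn
  -- counting
  obtain ⟨N, hcount⟩ := counting 𝒜 ℬ hBA hAfd
  set q := sB / Nat.gcd sA sB with hq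
  have hg0 : 0 < Nat.gcd sA sB := Nat.gcd_pos_of_pos_left _ hsA0
  have hq0 : 0 < q := Nat.div_pos (Nat.le_of_dvd hsB0 (Nat.gcd_dvd_right sA sB)) hg0
  have hsBq : sB ≤ sA * q := by
    have h1 : Nat.gcd sA sB * q = sB := Nat.mul_div_cancel' (Nat.gcd_dvd_right sA sB)
    have h2 : Nat.gcd sA sB ≤ sA := Nat.le_of_dvd hsA0 (Nat.gcd_dvd_left sA sB)
    calc sB = Nat.gcd sA sB * q := h1.symm
      _ ≤ sA * q := Nat.mul_le_mul_right _ h2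
  have hzex : ∀ j : ℕ, ∃ z : R, z ≠ 0 ∧ z ∈ 𝒜 (sA * (i₁ + j)) := by
    intro j
    have hfr : a (sA * (i₁ + j)) ≠ 0 := hi₁ (i₁ + j) (Nat.le_add_right _ _)
    haveI := hAfd (sA * (i₁ + j))
    haveI : Nontrivial ↥(𝒜 (sA * (i₁ + j))) := Module.finrank_pos_iff.mp (Nat.pos_of_ne_zero hfr)
    obtain ⟨xx, hxx⟩ := exists_ne (0 : ↥(𝒜 (sA * (i₁ + j))))
    exact ⟨xx, fun hh => hxx (Subtype.ext (by simpa using hh)), xx.2⟩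
  set E : ℕ → ℕ := fun j => N + sA * (i₁ + j) with hEdef
  have hkey : ∀ (m : ℕ) (j : Fin q), d * b (sB * m) ≤ a (sB * m + E j.1) := by
    intro m j
    obtain ⟨z, hz, hz𝒜⟩ := hzex j.1
    have h1 := hcount (sB * m) (sA * (i₁ + j.1)) z hz hz𝒜
    rwa [Nat.add_assoc] at h1
  have hEinj : Function.Injective (fun p : ℕ × Fin q => sB * p.1 + E p.2.1) := by
    rintro ⟨m, j⟩ ⟨m', j'⟩ hpq
    simp only [hEdef] at hpq
    have h1 : sB * m + sA * (j : ℕ) = sB * m' + sA * (j' : ℕ) := by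
      have e1 : sA * (i₁ + (j : ℕ)) = sA * i₁ + sA * (j : ℕ) := Nat.mul_add _ _ _
      have e2 : sA * (i₁ + (j' : ℕ)) = sA * i₁ + sA * (j' : ℕ) := Nat.mul_add _ _ _
      rw [e1] at hpq
      rw [e2] at hpq
      generalize hu : sB * m = u at hpq ⊢
      generalize hu' : sB * m' = u' at hpq ⊢
      generalize hv : sA * (j : ℕ) = v at hpq ⊢
      generalize hv' : sA * (j' : ℕ) = v' at hpq ⊢
      generalize hw : sA * i₁ = w at hpq
      omega
    obtain ⟨hm, hj⟩ := inj_aux hsA0 hsB0 j.isLt j'.isLt h1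
    exact Prod.ext hm (Fin.ext hj)
  -- eventually facts on the filter
  have hev : ∀ᶠ t : ℝ in nhdsWithin 1 (Set.Iio 1), 0 < t ∧ t < 1 := by
    have h2 : ∀ᶠ t : ℝ in nhdsWithin 1 (Set.Iio 1), 0 < t :=
      eventually_nhdsWithin_of_eventually_nhds (eventually_gt_nhds (by norm_num))
    have h1 : ∀ᶠ t : ℝ in nhdsWithin 1 (Set.Iio 1), t < 1 := by
      filter_upwards [self_mem_nhdsWithin] with t ht
      exact ht
    exact h2.and h1
  have hVB0 : 0 ≤ VB := by
    apply ge_of_tendsto hVB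
    filter_upwards [hev] with t ht
    exact mul_nonneg (pow_nonneg (by linarith [ht.2]) r)
      (tsum_nonneg fun n => mul_nonneg (Nat.cast_nonneg _) (pow_nonneg (le_of_lt ht.1) _))
  -- main limit comparison
  set G : ℝ → ℝ := fun t =>
    (∑ j : Fin q, (d : ℝ) * t ^ (E j.1)) * ((1 - t) ^ r * ∑' n, (b n : ℝ) * t ^ n) with hG
  have hGle : ∀ᶠ t in nhdsWithin (1 : ℝ) (Set.Iio 1),
      G t ≤ (1 - t) ^ r * ∑' n, (a n : ℝ) * t ^ n := by
    filter_upwards [hev] with t ht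
    have hstep := analysis_step hEinj hkey hBsupp hsB0 hCb hba ht.1 ht.2
    calc G t = (1 - t) ^ r *
          ((∑ j : Fin q, (d : ℝ) * t ^ (E j.1)) * ∑' n, (b n : ℝ) * t ^ n) := by
          rw [hG]; ring
      _ ≤ (1 - t) ^ r * ∑' n, (a n : ℝ) * t ^ n :=
          mul_le_mul_of_nonneg_left hstep (pow_nonneg (by linarith [ht.2]) r)
  have hGtend : Tendsto G (nhdsWithin 1 (Set.Iio 1)) (nhds ((q * d : ℝ) * VB)) := by
    have hcont : Continuous (fun t : ℝ => ∑ j : Fin q, (d : ℝ) * t ^ (E j.1)) := by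
      apply continuous_finset_sum
      intro j _
      exact continuous_const.mul (continuous_pow _)
    have hpoly : Tendsto (fun t : ℝ => ∑ j : Fin q, (d : ℝ) * t ^ (E j.1))
        (nhdsWithin 1 (Set.Iio 1)) (nhds (q * d : ℝ)) := by
      have h3 := hcont.tendsto 1
      have hval : (∑ j : Fin q, (d : ℝ) * (1 : ℝ) ^ (E j.1)) = (q * d : ℝ) := by
        simp [Finset.sum_const, Finset.card_univ]
      rw [hval] at h3
      exact h3.mono_left nhdsWithin_le_nhds
    exact hpoly.mul hVB
  have hmain : (q * d : ℝ) * VB ≤ VA := le_of_tendsto_of_tendsto hGtend hVA hGle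
  -- conclude
  have hd0 : (0 : ℝ) ≤ d := Nat.cast_nonneg d
  have hsA0' : (0 : ℝ) ≤ sA := Nat.cast_nonneg sA
  have hq' : (sB : ℝ) ≤ (sA : ℝ) * q := by exact_mod_cast hsBq
  nlinarith [mul_le_mul_of_nonneg_left hmain hsA0',
    mul_le_mul_of_nonneg_right hq' (mul_nonneg hd0 hVB0)]
end

section
/- For integers d > e ≥ 1 and n ≥ 1, the quantity (ν_n(d) - ν_n(e))/(d - e) is a nonnegative integer, where ν_n(x) = Σ_{m|n} μ(n/m) x^m. -/
open ArithmeticFunction Finset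
open scoped ArithmeticFunction.Moebius

private lemma pow_sub_mono' {d e : ℤ} (he : 1 ≤ e) (hed : e ≤ d) {m k : ℕ} (h : m ≤ k) :
    d ^ m - e ^ m ≤ d ^ k - e ^ k := by
  have hd : (1:ℤ) ≤ d := he.trans hed
  have he0 : (0:ℤ) ≤ e := by linarith
  have h1 : e ^ m * (e ^ (k - m) - 1) ≤ d ^ m * (d ^ (k - m) - 1) := by
    apply mul_le_mul (pow_le_pow_left₀ he0 hed m)
      (sub_le_sub_right (pow_le_pow_left₀ he0 hed _) 1)
      (by nlinarith [one_le_pow₀ he (n := k - m)]) (by positivity)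
  have hdk : d ^ m * d ^ (k - m) = d ^ k := by rw [← pow_add, Nat.add_sub_cancel' h]
  have hek : e ^ m * e ^ (k - m) = e ^ k := by rw [← pow_add, Nat.add_sub_cancel' h]
  nlinarith

/-- For integers `d > e ≥ 1` and `n ≥ 1`, the quantity `(ν_n(d) - ν_n(e))/(d-e)` is a
nonnegative integer, where `ν_n(x) = Σ_{m | n} μ(n/m) x^m`. -/
theorem stmt_10 (d e : ℤ) (he : 1 ≤ e) (hde : e < d) (n : ℕ) (hn : 1 ≤ n) :
    ∃ q : ℤ, 0 ≤ q ∧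
      (∑ m ∈ n.divisors, (μ (n / m) : ℤ) * d ^ m) - (∑ m ∈ n.divisors, (μ (n / m) : ℤ) * e ^ m)
        = q * (d - e) := by
  have hd2 : (2:ℤ) ≤ d := by linarith
  have he0 : (0:ℤ) ≤ e := by linarith
  set S := (∑ m ∈ n.divisors, (μ (n / m) : ℤ) * d ^ m)
      - (∑ m ∈ n.divisors, (μ (n / m) : ℤ) * e ^ m) with hS
  have hS' : S = ∑ m ∈ n.divisors, (μ (n / m) : ℤ) * (d ^ m - e ^ m) := by
    rw [hS, ← Finset.sum_sub_distrib]
    exact Finset.sum_congr rfl fun m _ => by ring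
  have hdvd : (d - e) ∣ S := by
    rw [hS']
    exact Finset.dvd_sum fun m _ => Dvd.dvd.mul_left (sub_dvd_pow_sub_pow d e m) _
  obtain ⟨q, hq⟩ := hdvd
  set k := n / 2 with hk
  have h2k : 2 * k ≤ n := by omega
  -- monotone bound for each proper divisor term
  have hterm : ∀ m ∈ n.properDivisors, -(d ^ k - e ^ k) ≤ (μ (n / m) : ℤ) * (d ^ m - e ^ m) := by
    intro m hm
    obtain ⟨⟨c, rfl⟩, hlt⟩ := Nat.mem_properDivisors.mp hm
    have hc : 2 ≤ c := by rcases c with _ | _ | c <;> omega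
    have hmk : m ≤ k := by
      have : m * 2 ≤ m * c := Nat.mul_le_mul_left m hc
      omega
    have h1 : (0:ℤ) ≤ d ^ m - e ^ m := by
      have := pow_le_pow_left₀ he0 hde.le m; linarith
    have h2 : d ^ m - e ^ m ≤ d ^ k - e ^ k := pow_sub_mono' he hde.le hmk
    have hμ : -1 ≤ (μ (m * c / m) : ℤ) := by
      have := (abs_le.mp (ArithmeticFunction.abs_moebius_le_one (n := m * c / m))).1
      exact_mod_cast this
    nlinarith
  -- card of proper divisors ≤ k
  have hcard : n.properDivisors.card ≤ k := by
    have hsub : n.properDivisors ⊆ Finset.Icc 1 k := by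
      intro m hm
      obtain ⟨⟨c, rfl⟩, hlt⟩ := Nat.mem_properDivisors.mp hm
      have hc : 2 ≤ c := by rcases c with _ | _ | c <;> omega
      have hm1 : 1 ≤ m := Nat.one_le_iff_ne_zero.mpr (fun h => by simp [h] at hlt)
      have : m * 2 ≤ m * c := Nat.mul_le_mul_left m hc
      simp only [Finset.mem_Icc]
      omega
    calc n.properDivisors.card ≤ (Finset.Icc 1 k).card := Finset.card_le_card hsub
      _ = k := by simp
  have hpos : 0 ≤ S := by
    have hins : insert n n.properDivisors = n.divisors :=
      Nat.insert_self_properDivisors (by omega)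
    have hsum : S = (d ^ n - e ^ n)
        + ∑ m ∈ n.properDivisors, (μ (n / m) : ℤ) * (d ^ m - e ^ m) := by
      rw [hS', ← hins, Finset.sum_insert Nat.self_notMem_properDivisors,
        Nat.div_self (by omega : 0 < n)]
      simp
    have hlb : (n.properDivisors.card : ℤ) * (e ^ k - d ^ k)
        ≤ ∑ m ∈ n.properDivisors, (μ (n / m) : ℤ) * (d ^ m - e ^ m) := by
      have := Finset.card_nsmul_le_sum n.properDivisors
        (fun m => (μ (n / m) : ℤ) * (d ^ m - e ^ m)) (-(d ^ k - e ^ k)) hterm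
      simpa [smul_neg] using this
    have hkek : (0:ℤ) ≤ d ^ k - e ^ k := by
      have := pow_le_pow_left₀ he0 hde.le k; linarith
    have hcard' : (n.properDivisors.card : ℤ) * (d ^ k - e ^ k) ≤ (k : ℤ) * (d ^ k - e ^ k) := by
      have : (n.properDivisors.card : ℤ) ≤ (k : ℤ) := by exact_mod_cast hcard
      exact mul_le_mul_of_nonneg_right this hkek
    have hkd : (k : ℤ) < d ^ k := by
      calc (k : ℤ) < 2 ^ k := by exact_mod_cast (Nat.lt_two_pow_self (n := k))
        _ ≤ d ^ k := pow_le_pow_left₀ (by norm_num) hd2 k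
    have hek : (0:ℤ) < e ^ k := by positivity
    have hk2 : (k : ℤ) * (d ^ k - e ^ k) ≤ d ^ (2 * k) - e ^ (2 * k) := by
      have hd2k : d ^ (2 * k) = d ^ k * d ^ k := by rw [two_mul, pow_add]
      have he2k : e ^ (2 * k) = e ^ k * e ^ k := by rw [two_mul, pow_add]
      nlinarith
    have hk3 : d ^ (2 * k) - e ^ (2 * k) ≤ d ^ n - e ^ n := pow_sub_mono' he hde.le h2k
    have : -(d ^ n - e ^ n) ≤ ∑ m ∈ n.properDivisors, (μ (n / m) : ℤ) * (d ^ m - e ^ m) := by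
      have hring : (n.properDivisors.card : ℤ) * (e ^ k - d ^ k)
          = -((n.properDivisors.card : ℤ) * (d ^ k - e ^ k)) := by ring
      rw [hring] at hlb
      linarith
    linarith [hsum, this]
  refine ⟨q, ?_, by rw [hq]; ring⟩
  by_contra h
  push_neg at h
  have := mul_neg_of_pos_of_neg (show (0:ℤ) < d - e by linarith) h
  linarith [hpos, hq ▸ this]
end

section
/- The power series identity Σ_{i≥0} C(i+a, a)·C(i+b, b)·t^i = P(t)/(1-t)^{a+b+1} holds for some polynomial P with P(1) = (a+b)!/(a! b!), for all nonnegative integers a, b. Equivalently, lim_{t→1} (1-t)^{a+b+1} Σ_{i≥0} C(i+a,a) C(i+b,b) t^i = C(a+b, a). -/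
open Filter Finset

/-- Vandermonde in the form `C(i+a, a) = Σ_j C(a,j) C(i,j)`. -/
lemma aux_vand (a i : ℕ) :
    (i + a).choose a = ∑ j ∈ range (a + 1), a.choose j * i.choose j := by
  rw [Nat.add_choose_eq, Finset.Nat.sum_antidiagonal_eq_sum_range_succ_mk]
  apply Finset.sum_congr rfl
  intro k hk
  simp only [Finset.mem_range] at hk
  rw [Nat.choose_symm (by omega : k ≤ a), mul_comm]

/-- Subset-of-subset identity with vanishing cases handled. -/
lemma aux_triv (i b j : ℕ) :
    (b + j).choose b * (i + b).choose (b + j) = (i + b).choose b * i.choose j := by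
  rcases le_or_gt j i with h | h
  · have := Nat.choose_mul (n := i + b) (k := b + j) (s := b) (by omega)
    rw [mul_comm ((i+b).choose (b+j))] at this
    rw [this]
    congr 2 <;> omega
  · rw [Nat.choose_eq_zero_of_lt (by omega : i + b < b + j),
      Nat.choose_eq_zero_of_lt h]
    simp

/-- Key pointwise identity. -/
lemma aux_key (i a b : ℕ) :
    (i + a).choose a * (i + b).choose b
      = ∑ j ∈ range (a + 1), a.choose j * ((b + j).choose b * (i + b).choose (b + j)) := by
  calc (i + a).choose a * (i + b).choose b
      = (∑ j ∈ range (a + 1), a.choose j * i.choose j) * (i + b).choose b := by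
        rw [aux_vand]
    _ = ∑ j ∈ range (a + 1), a.choose j * ((i + b).choose b * i.choose j) := by
        rw [Finset.sum_mul]; apply Finset.sum_congr rfl; intro j _; ring
    _ = _ := by
        apply Finset.sum_congr rfl; intro j _; rw [aux_triv]

/-- Shifted geometric-choose sum. -/
lemma aux_shift (b j : ℕ) {t : ℝ} (ht : |t| < 1) :
    HasSum (fun i : ℕ => ((i + b).choose (b + j) : ℝ) * t ^ i)
      (t ^ j * (1 / (1 - t) ^ (b + j + 1))) := by
  have base := hasSum_choose_mul_geometric_of_norm_lt_one (𝕜 := ℝ) (b + j)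
    (by simpa [Real.norm_eq_abs] using ht)
  have h2 := base.mul_left (t ^ j)
  have h3 : HasSum (fun m : ℕ => (((m + j) + b).choose (b + j) : ℝ) * t ^ (m + j))
      (t ^ j * (1 / (1 - t) ^ (b + j + 1))) := by
    have e : ∀ m : ℕ, (((m + j) + b).choose (b + j) : ℝ) * t ^ (m + j)
        = t ^ j * (((m + (b + j)).choose (b + j) : ℝ) * t ^ m) := by
      intro m
      rw [show m + j + b = m + (b + j) by ring, pow_add]
      ring
    simpa only [e] using h2
  have := (hasSum_nat_add_iff (f := fun i : ℕ => ((i + b).choose (b + j) : ℝ) * t ^ i) j).mp h3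
  have hz : ∑ i ∈ range j, ((i + b).choose (b + j) : ℝ) * t ^ i = 0 := by
    apply Finset.sum_eq_zero
    intro i hi
    simp only [Finset.mem_range] at hi
    rw [Nat.choose_eq_zero_of_lt (by omega)]
    simp
  rwa [hz, add_zero] at this

lemma aux_hasSum (a b : ℕ) {t : ℝ} (ht : |t| < 1) :
    HasSum (fun i : ℕ => ((i + a).choose a : ℝ) * ((i + b).choose b : ℝ) * t ^ i)
      (∑ j ∈ range (a + 1),
        (a.choose j : ℝ) * ((b + j).choose b : ℝ) * (t ^ j * (1 / (1 - t) ^ (b + j + 1)))) := by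
  have h : ∀ i : ℕ, ((i + a).choose a : ℝ) * ((i + b).choose b : ℝ) * t ^ i
      = ∑ j ∈ range (a + 1),
          (a.choose j : ℝ) * ((b + j).choose b : ℝ) * (((i + b).choose (b + j) : ℝ) * t ^ i) := by
    intro i
    have := aux_key i a b
    calc ((i + a).choose a : ℝ) * ((i + b).choose b : ℝ) * t ^ i
        = (((i + a).choose a * (i + b).choose b : ℕ) : ℝ) * t ^ i := by push_cast; ring
      _ = _ := by
          rw [this]
          push_cast
          rw [Finset.sum_mul]
          apply Finset.sum_congr rfl; intro j _; ring
  rw [funext h]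
  exact hasSum_sum fun j _ => ((aux_shift b j ht).mul_left _)

/-- `lim_{t→1⁻} (1-t)^{a+b+1} Σ_{i≥0} C(i+a,a) C(i+b,b) t^i = C(a+b, a)`. -/
theorem stmt_13 (a b : ℕ) :
    Tendsto
      (fun t : ℝ => (1 - t) ^ (a + b + 1) *
        ∑' i : ℕ, ((i + a).choose a : ℝ) * ((i + b).choose b : ℝ) * t ^ i)
      (nhdsWithin 1 (Set.Iio 1)) (nhds ((a + b).choose a : ℝ)) := by
  set F : ℝ → ℝ := fun t => ∑ j ∈ range (a + 1),
    (a.choose j : ℝ) * ((b + j).choose b : ℝ) * t ^ j * (1 - t) ^ (a - j) with hF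
  have hFcont : Continuous F := by
    apply continuous_finset_sum
    intro j _
    fun_prop
  have hF1 : F 1 = ((a + b).choose a : ℝ) := by
    rw [hF]
    simp only []
    rw [Finset.sum_eq_single a]
    · have : (a + b).choose b = (a + b).choose a := (Nat.choose_symm_add).symm
      simp [Nat.add_comm b a, this]
    · intro j hj hja
      have : 0 < a - j := by simp only [Finset.mem_range] at hj; omega
      rw [sub_self, zero_pow (by omega)]
      ring
    · intro h; exact absurd (Finset.self_mem_range_succ a) h
  have htend : Tendsto F (nhdsWithin 1 (Set.Iio 1)) (nhds ((a + b).choose a : ℝ)) := by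
    rw [← hF1]
    exact (hFcont.continuousAt.continuousWithinAt).tendsto
  apply htend.congr'
  filter_upwards [Ioo_mem_nhdsLT (by norm_num : (-1 : ℝ) < 1)] with t htm
  have ht : |t| < 1 := abs_lt.mpr ⟨htm.1, htm.2⟩
  have hne : (1 : ℝ) - t ≠ 0 := by
    intro h; have : t = 1 := by linarith
    exact absurd (this ▸ htm.2) (lt_irrefl _)
  rw [(aux_hasSum a b ht).tsum_eq, Finset.mul_sum]
  apply Finset.sum_congr rfl
  intro j hj
  simp only [Finset.mem_range] at hj
  have hpow : (1 - t) ^ (a + b + 1) = (1 - t) ^ (a - j) * (1 - t) ^ (b + j + 1) := by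
    rw [← pow_add]
    congr 1
    omega
  rw [hpow]
  field_simp
end
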